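/- Let a_G, G ∈ 𝒢 (a finite index set), be positive semidefinite symmetric bilinear forms on a real vector space H with Σ_{G} a_G(v,w) = a(v,w). Suppose subspaces V₀,…,V_m ⊆ H and a symmetric 'interaction' relation such that for each G the number of indices i with a_G nonzero on V_i is at most c_G + 1. If for each G, Σ_{i,j=0}^m a_G(v_i, w_j) ≤ (c_G+1)(Σ_i a_G(v_i,v_i))^{1/2}(Σ_j a_G(w_j,w_j))^{1/2} for all v_i ∈ V_i, w_j ∈ V_j, and c_G ≤ c_N for all G, then Σ_{i,j=0}^m a(v_i, w_j) ≤ (c_N+1)(Σ_i a(v_i,v_i))^{1/2}(Σ_j a(w_j,w_j))^{1/2}. -/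

import Mathlib

/-- Summation step for the strengthened Cauchy–Schwarz inequality: local
Cauchy–Schwarz estimates for the local forms `a_G` with constants `c_G + 1 ≤
c_N + 1` sum up (via `a = Σ_G a_G` and Cauchy–Schwarz in `ℝ^{m+1}`) to a global
strengthened Cauchy–Schwarz inequality with constant `c_N + 1`. -/
theorem stmt10
    {H : Type*} [AddCommGroup H] [Module ℝ H]
    {G : Type*} [Fintype G]
    (aG : G → H → H → ℝ) (a : H → H → ℝ)
    (hsum : ∀ v w : H, a v w = ∑ g, aG g v w)
    (hsymm : ∀ g (v w : H), aG g v w = aG g w v)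
    (hpsd : ∀ g (v : H), 0 ≤ aG g v v)
    {m : ℕ} (Vi : Fin (m + 1) → Submodule ℝ H)
    (c : G → ℕ) (cN : ℕ) (hc : ∀ g, c g ≤ cN)
    (hloc : ∀ g, ∀ vv ww : Fin (m + 1) → H,
      (∀ i, vv i ∈ Vi i) → (∀ j, ww j ∈ Vi j) →
      (∑ i, ∑ j, aG g (vv i) (ww j)) ≤
        ((c g : ℝ) + 1) * Real.sqrt (∑ i, aG g (vv i) (vv i)) *
          Real.sqrt (∑ j, aG g (ww j) (ww j)))
    (vv ww : Fin (m + 1) → H)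
    (hv : ∀ i, vv i ∈ Vi i) (hw : ∀ j, ww j ∈ Vi j) :
    (∑ i, ∑ j, a (vv i) (ww j)) ≤
      ((cN : ℝ) + 1) * Real.sqrt (∑ i, a (vv i) (vv i)) *
        Real.sqrt (∑ j, a (ww j) (ww j)) := by
  set A : G → ℝ := fun g => ∑ i, aG g (vv i) (vv i) with hA
  set B : G → ℝ := fun g => ∑ j, aG g (ww j) (ww j) with hB
  have hAnn : ∀ g, 0 ≤ A g := fun g => Finset.sum_nonneg fun i _ => hpsd g _
  have hBnn : ∀ g, 0 ≤ B g := fun g => Finset.sum_nonneg fun j _ => hpsd g _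
  have h1 : (∑ i, ∑ j, a (vv i) (ww j)) = ∑ g, ∑ i, ∑ j, aG g (vv i) (ww j) := by
    simp_rw [hsum]
    calc (∑ i, ∑ j, ∑ g, aG g (vv i) (ww j))
        = ∑ i, ∑ g, ∑ j, aG g (vv i) (ww j) :=
          Finset.sum_congr rfl fun i _ => Finset.sum_comm
      _ = ∑ g, ∑ i, ∑ j, aG g (vv i) (ww j) := Finset.sum_comm
  have h2 : ∀ g, (∑ i, ∑ j, aG g (vv i) (ww j)) ≤
      ((cN : ℝ) + 1) * (Real.sqrt (A g) * Real.sqrt (B g)) := by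
    intro g
    calc (∑ i, ∑ j, aG g (vv i) (ww j))
        ≤ ((c g : ℝ) + 1) * Real.sqrt (A g) * Real.sqrt (B g) := hloc g vv ww hv hw
      _ = ((c g : ℝ) + 1) * (Real.sqrt (A g) * Real.sqrt (B g)) := mul_assoc _ _ _
      _ ≤ ((cN : ℝ) + 1) * (Real.sqrt (A g) * Real.sqrt (B g)) :=
          mul_le_mul_of_nonneg_right (by exact_mod_cast Nat.add_le_add_right (hc g) 1)
            (by positivity)
  have h3 : (∑ g, Real.sqrt (A g) * Real.sqrt (B g)) ≤
      Real.sqrt (∑ g, A g) * Real.sqrt (∑ g, B g) := by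
    have hsq : ((∑ g, Real.sqrt (A g) * Real.sqrt (B g)))^2 ≤
        (∑ g, A g) * (∑ g, B g) := by
      have := Finset.sum_mul_sq_le_sq_mul_sq (Finset.univ : Finset G)
        (fun g => Real.sqrt (A g)) (fun g => Real.sqrt (B g))
      simpa [Real.sq_sqrt (hAnn _), Real.sq_sqrt (hBnn _)] using this
    have hnn : 0 ≤ ∑ g, Real.sqrt (A g) * Real.sqrt (B g) :=
      Finset.sum_nonneg fun g _ => mul_nonneg (Real.sqrt_nonneg _) (Real.sqrt_nonneg _)
    calc (∑ g, Real.sqrt (A g) * Real.sqrt (B g))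
        = Real.sqrt (((∑ g, Real.sqrt (A g) * Real.sqrt (B g)))^2) := (Real.sqrt_sq hnn).symm
      _ ≤ Real.sqrt ((∑ g, A g) * (∑ g, B g)) := Real.sqrt_le_sqrt hsq
      _ = Real.sqrt (∑ g, A g) * Real.sqrt (∑ g, B g) :=
          Real.sqrt_mul (Finset.sum_nonneg fun g _ => hAnn g) _
  have hAeq : (∑ i, a (vv i) (vv i)) = ∑ g, A g := by
    simp_rw [hsum, hA]; rw [Finset.sum_comm]
  have hBeq : (∑ j, a (ww j) (ww j)) = ∑ g, B g := by
    simp_rw [hsum, hB]; rw [Finset.sum_comm]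
  calc (∑ i, ∑ j, a (vv i) (ww j))
      = ∑ g, ∑ i, ∑ j, aG g (vv i) (ww j) := h1
    _ ≤ ∑ g, ((cN : ℝ) + 1) * (Real.sqrt (A g) * Real.sqrt (B g)) :=
        Finset.sum_le_sum fun g _ => h2 g
    _ = ((cN : ℝ) + 1) * ∑ g, Real.sqrt (A g) * Real.sqrt (B g) := by
        rw [Finset.mul_sum]
    _ ≤ ((cN : ℝ) + 1) * (Real.sqrt (∑ g, A g) * Real.sqrt (∑ g, B g)) :=
        mul_le_mul_of_nonneg_left h3 (by positivity)
    _ = ((cN : ℝ) + 1) * Real.sqrt (∑ i, a (vv i) (vv i)) *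
        Real.sqrt (∑ j, a (ww j) (ww j)) := by rw [hAeq, hBeq, mul_assoc]
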